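/- The map i : ℚ/ℤ → ℚ ∩ [0,1) sending each coset to its unique representative in [0,1) is a coarse equivalence, where ℚ/ℤ carries the quotient norm of ‖m/n‖_ℚ = |m/n| + ln(n) and ℚ ∩ [0,1) carries the metric induced by ‖·‖_ℚ; in particular d_ℚ(i(r̄), i(s̄)) ≤ 3 d(r̄, s̄) for all r̄, s̄ ∈ ℚ/ℤ. -/

import Mathlib

/-- `d` is a metric on `X` (given as an explicit distance function). -/
def IsMetricD {X : Type*} (d : X → X → ℝ) : Prop :=
  (∀ x y, 0 ≤ d x y) ∧ (∀ x y, d x y = 0 ↔ x = y) ∧ (∀ x y, d x y = d y x) ∧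
    ∀ x y z, d x z ≤ d x y + d y z

/-- A set is bounded with respect to the distance function `d`. -/
def IsBoundedD {X : Type*} (d : X → X → ℝ) (B : Set X) : Prop :=
  ∃ C : ℝ, ∀ x ∈ B, ∀ y ∈ B, d x y ≤ C

/-- `f` is bornologous with respect to the distance functions `dX`, `dY`. -/
def BornologousD {X Y : Type*} (dX : X → X → ℝ) (dY : Y → Y → ℝ) (f : X → Y) : Prop :=
  ∀ R > (0 : ℝ), ∃ S > (0 : ℝ), ∀ x y, dX x y < R → dY (f x) (f y) < S

/-- `f` is metrically proper: preimages of bounded sets are bounded. -/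
def MetricallyProperD {X Y : Type*} (dX : X → X → ℝ) (dY : Y → Y → ℝ) (f : X → Y) : Prop :=
  ∀ B : Set Y, IsBoundedD dY B → IsBoundedD dX (f ⁻¹' B)

/-- A coarse map is bornologous and metrically proper. -/
def CoarseMapD {X Y : Type*} (dX : X → X → ℝ) (dY : Y → Y → ℝ) (f : X → Y) : Prop :=
  BornologousD dX dY f ∧ MetricallyProperD dX dY f

/-- Two maps are close if pointwise distances are uniformly bounded. -/
def CloseD {X Y : Type*} (dY : Y → Y → ℝ) (f g : X → Y) : Prop :=
  ∃ C : ℝ, ∀ x, dY (f x) (g x) ≤ C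

/-- `f` is a coarse equivalence: a coarse map with a coarse inverse up to closeness. -/
def CoarseEquivD {X Y : Type*} (dX : X → X → ℝ) (dY : Y → Y → ℝ) (f : X → Y) : Prop :=
  CoarseMapD dX dY f ∧ ∃ g : Y → X, CoarseMapD dY dX g ∧
    CloseD dY (f ∘ g) id ∧ CloseD dX (g ∘ f) id

/-- The norm `‖m/n‖ = |m/n| + ln n` on `ℚ`, for `m/n` in standard form. -/
noncomputable def qNorm (q : ℚ) : ℝ := |(q : ℝ)| + Real.log q.den

/-- The left-invariant metric on `ℚ` induced by `qNorm`. -/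
noncomputable def qDist (x y : ℚ) : ℝ := qNorm (y - x)

/-- The quotient group `ℚ/ℤ`. -/
abbrev QZ : Type := ℚ ⧸ AddSubgroup.zmultiples (1 : ℚ)

/-- The quotient norm on `ℚ/ℤ` induced by `qNorm`. -/
noncomputable def QZnorm (x : QZ) : ℝ :=
  sInf {c : ℝ | ∃ r : ℚ, (QuotientAddGroup.mk r : QZ) = x ∧ c = qNorm r}

/-- The left-invariant metric on `ℚ/ℤ` induced by the quotient norm. -/
noncomputable def QZdist (x y : QZ) : ℝ := QZnorm (y - x)

lemma qNorm_nonneg (q : ℚ) : 0 ≤ qNorm q := by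
  have h1 : (1 : ℝ) ≤ (q.den : ℝ) := by exact_mod_cast q.pos
  exact add_nonneg (abs_nonneg _) (Real.log_nonneg h1)

lemma qNorm_zero : qNorm 0 = 0 := by simp [qNorm]

lemma qden_add_int (q : ℚ) (k : ℤ) : (q + (k : ℚ)).den = q.den := by
  have h1 : (q + (k : ℚ)).den ∣ q.den * (k : ℚ).den := Rat.add_den_dvd q k
  have h2 : q.den ∣ (q + (k : ℚ)).den * ((-k : ℤ) : ℚ).den := by
    have := Rat.add_den_dvd (q + (k : ℚ)) ((-k : ℤ) : ℚ)
    simpa using this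
  simp only [Rat.den_intCast, mul_one] at h1 h2
  exact Nat.dvd_antisymm h1 h2

lemma mk_eq_iff (a b : ℚ) :
    (QuotientAddGroup.mk a : QZ) = QuotientAddGroup.mk b ↔ ∃ k : ℤ, b = a + k := by
  rw [QuotientAddGroup.eq]
  constructor
  · rintro h
    rcases AddSubgroup.mem_zmultiples_iff.mp h with ⟨k, hk⟩
    rw [zsmul_eq_mul, mul_one] at hk
    exact ⟨k, by linarith⟩
  · rintro ⟨k, rfl⟩
    exact AddSubgroup.mem_zmultiples_iff.mpr ⟨k, by rw [zsmul_eq_mul, mul_one]; ring⟩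

lemma QZset_nonempty (x : QZ) :
    {c : ℝ | ∃ r : ℚ, (QuotientAddGroup.mk r : QZ) = x ∧ c = qNorm r}.Nonempty := by
  induction x using QuotientAddGroup.induction_on with
  | H r => exact ⟨qNorm r, r, rfl, rfl⟩

lemma QZset_bdd (x : QZ) :
    BddBelow {c : ℝ | ∃ r : ℚ, (QuotientAddGroup.mk r : QZ) = x ∧ c = qNorm r} := by
  refine ⟨0, ?_⟩
  rintro c ⟨r, -, rfl⟩
  exact qNorm_nonneg r

lemma QZnorm_le {x : QZ} {r : ℚ} (h : (QuotientAddGroup.mk r : QZ) = x) :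
    QZnorm x ≤ qNorm r :=
  csInf_le (QZset_bdd x) ⟨r, h, rfl⟩

lemma QZnorm_nonneg (x : QZ) : 0 ≤ QZnorm x := by
  refine le_csInf (QZset_nonempty x) ?_
  rintro c ⟨r, -, rfl⟩
  exact qNorm_nonneg r

lemma QZnorm_zero : QZnorm 0 = 0 := by
  have h := QZnorm_le (x := (0 : QZ)) (r := 0) rfl
  rw [qNorm_zero] at h
  exact le_antisymm h (QZnorm_nonneg 0)

lemma key_step (t : ℚ) (ht : |t| < 1) (k : ℤ) : qNorm t ≤ 3 * qNorm (t + (k : ℚ)) := by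
  rcases eq_or_ne k 0 with rfl | hk
  · simp only [Int.cast_zero, add_zero]
    linarith [qNorm_nonneg t]
  rcases eq_or_ne t 0 with rfl | htz
  · rw [qNorm_zero]
    linarith [qNorm_nonneg ((0 : ℚ) + (k : ℚ))]
  -- t ≠ 0, |t| < 1, so t is not an integer and t.den ≥ 2
  have hden : 2 ≤ t.den := by
    by_contra h
    interval_cases hd : t.den
    · exact absurd hd t.den_nz
    · have : (t.num : ℚ) = t := Rat.den_eq_one_iff t |>.mp hd
      have hnum : t.num ≠ 0 := Rat.num_ne_zero.mpr htz
      have : (1 : ℚ) ≤ |t| := by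
        rw [← this]
        exact_mod_cast Int.one_le_abs hnum
      linarith
  have hlog : Real.log 2 ≤ Real.log t.den := by
    apply Real.log_le_log (by norm_num)
    exact_mod_cast hden
  have hlog2 : (0.6931471803 : ℝ) < Real.log 2 := Real.log_two_gt_d9
  have htR : |(t : ℝ)| < 1 := by
    rw [← Rat.cast_abs]
    exact_mod_cast ht
  have hden' : (t + (k : ℚ)).den = t.den := qden_add_int t k
  have habs : (0 : ℝ) ≤ |((t + (k : ℚ) : ℚ) : ℝ)| := abs_nonneg _
  unfold qNorm
  rw [hden']
  linarith

lemma key (t : ℚ) (ht : |t| < 1) : qNorm t ≤ 3 * QZnorm (QuotientAddGroup.mk t) := by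
  have h : qNorm t / 3 ≤ QZnorm (QuotientAddGroup.mk t) := by
    refine le_csInf (QZset_nonempty _) ?_
    rintro c ⟨r, hr, rfl⟩
    rcases (mk_eq_iff r t).mp hr with ⟨k, hk⟩
    have hh : r = t + ((-k : ℤ) : ℚ) := by push_cast; push_cast at hk; linarith
    rw [hh]
    linarith [key_step t ht (-k)]
  linarith

lemma mk_fract (r : ℚ) :
    (QuotientAddGroup.mk (Int.fract r) : QZ) = QuotientAddGroup.mk r := by
  rw [mk_eq_iff]
  exact ⟨⌊r⌋, by rw [Int.fract]; ring⟩

lemma fract_congr {a b : ℚ} (h : (QuotientAddGroup.mk a : QZ) = QuotientAddGroup.mk b) :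
    Int.fract a = Int.fract b := by
  rcases (mk_eq_iff a b).mp h with ⟨k, hk⟩
  exact Int.fract_eq_fract.mpr ⟨-k, by rw [hk]; push_cast; ring⟩

/-- The map `ℚ/ℤ → ℚ ∩ [0,1)` sending each coset to its representative in `[0,1)` is a
coarse equivalence; moreover `d_ℚ(i r̄, i s̄) ≤ 3 d(r̄, s̄)`. -/
theorem stmt15 :
    ∃ i : QZ → {q : ℚ // 0 ≤ q ∧ q < 1},
      (∀ x : QZ, (QuotientAddGroup.mk ((i x) : ℚ) : QZ) = x) ∧
      CoarseEquivD QZdist (fun a b : {q : ℚ // 0 ≤ q ∧ q < 1} => qDist (a : ℚ) (b : ℚ)) i ∧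
      ∀ r s : QZ, qDist ((i r) : ℚ) ((i s) : ℚ) ≤ 3 * QZdist r s := by
  set i : QZ → {q : ℚ // 0 ≤ q ∧ q < 1} :=
    fun x => ⟨Int.fract x.out, Int.fract_nonneg _, Int.fract_lt_one _⟩ with hi
  have hmk : ∀ x : QZ, (QuotientAddGroup.mk ((i x) : ℚ) : QZ) = x := by
    intro x
    calc (QuotientAddGroup.mk ((i x) : ℚ) : QZ)
        = QuotientAddGroup.mk x.out := mk_fract _
      _ = x := QuotientAddGroup.out_eq' x
  have hfix : ∀ q : {q : ℚ // 0 ≤ q ∧ q < 1}, i (QuotientAddGroup.mk (q : ℚ)) = q := by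
    intro q
    apply Subtype.ext
    have h := fract_congr (a := (QuotientAddGroup.mk (q : ℚ) : QZ).out) (b := (q : ℚ))
      (QuotientAddGroup.out_eq' (QuotientAddGroup.mk (q : ℚ) : QZ))
    show Int.fract (QuotientAddGroup.mk (q : ℚ) : QZ).out = (q : ℚ)
    rw [h, Int.fract_eq_self.mpr ⟨q.2.1, q.2.2⟩]
  have hsub : ∀ r s : QZ, s - r = QuotientAddGroup.mk (((i s) : ℚ) - ((i r) : ℚ)) := by
    intro r s
    have : (QuotientAddGroup.mk (((i s) : ℚ) - ((i r) : ℚ)) : QZ)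
        = QuotientAddGroup.mk ((i s) : ℚ) - QuotientAddGroup.mk ((i r) : ℚ) :=
      QuotientAddGroup.mk_sub _ _ _
    rw [this, hmk r, hmk s]
  have habs : ∀ r s : QZ, |((i s) : ℚ) - ((i r) : ℚ)| < 1 := by
    intro r s
    rw [abs_sub_lt_iff]
    constructor
    · linarith [(i s).2.2, (i r).2.1]
    · linarith [(i r).2.2, (i s).2.1]
  have hthree : ∀ r s : QZ, qDist ((i r) : ℚ) ((i s) : ℚ) ≤ 3 * QZdist r s := by
    intro r s
    have := key (((i s) : ℚ) - ((i r) : ℚ)) (habs r s)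
    rw [qDist, QZdist, hsub r s]
    exact this
  have hupper : ∀ r s : QZ, QZdist r s ≤ qDist ((i r) : ℚ) ((i s) : ℚ) := by
    intro r s
    rw [QZdist, qDist, hsub r s]
    exact QZnorm_le rfl
  set g : {q : ℚ // 0 ≤ q ∧ q < 1} → QZ := fun q => QuotientAddGroup.mk (q : ℚ) with hg
  have hgdist : ∀ a b : {q : ℚ // 0 ≤ q ∧ q < 1},
      QZdist (g a) (g b) ≤ qDist (a : ℚ) (b : ℚ) := by
    intro a b
    rw [QZdist, qDist]
    have : g b - g a = QuotientAddGroup.mk ((b : ℚ) - (a : ℚ)) := rfl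
    rw [this]
    exact QZnorm_le rfl
  refine ⟨i, hmk, ⟨⟨?_, ?_⟩, g, ⟨?_, ?_⟩, ?_, ?_⟩, hthree⟩
  · -- i bornologous
    intro R hR
    refine ⟨3 * R, by linarith, fun x y h => ?_⟩
    calc qDist ((i x) : ℚ) ((i y) : ℚ) ≤ 3 * QZdist x y := hthree x y
      _ < 3 * R := by linarith
  · -- i proper
    rintro B ⟨C, hC⟩
    exact ⟨C, fun x hx y hy => (hupper x y).trans (hC _ hx _ hy)⟩
  · -- g bornologous
    intro R hR
    exact ⟨R, hR, fun a b h => lt_of_le_of_lt (hgdist a b) h⟩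
  · -- g proper
    rintro B ⟨C, hC⟩
    refine ⟨3 * C, fun a ha b hb => ?_⟩
    have h1 : qDist (a : ℚ) (b : ℚ) = qDist ((i (g a)) : ℚ) ((i (g b)) : ℚ) := by
      rw [hfix a, hfix b]
    show qDist (a : ℚ) (b : ℚ) ≤ 3 * C
    rw [h1]
    calc qDist ((i (g a)) : ℚ) ((i (g b)) : ℚ) ≤ 3 * QZdist (g a) (g b) := hthree _ _
      _ ≤ 3 * C := by linarith [hC _ ha _ hb]
  · -- i ∘ g close to id
    refine ⟨0, fun q => ?_⟩
    simp only [Function.comp_apply, id_eq, hfix q]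
    rw [qDist, show i (g q) = q from hfix q, sub_self, qNorm_zero]
  · -- g ∘ i close to id
    refine ⟨0, fun x => ?_⟩
    show QZdist (g (i x)) x ≤ 0
    rw [QZdist]
    have hge : g (i x) = x := hmk x
    rw [hge, sub_self, QZnorm_zero]
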